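/- Equivalently in arithmetic form: let m ≥ 1, L = lcm(2,…,m), and r ≥ 1. Given natural numbers c₁,…,c_m with Σ i·c_i ≥ (r + m − 1)·L, there exist natural numbers d₁,…,d_m with d_i ≤ c_i for all i and Σ i·d_i = r·L. -/

import Mathlib

/-- From a family summing to at least `r`, extract a subfamily summing to exactly `r`. -/
lemma stmt_3_aux (s : Finset ℕ) (b : ℕ → ℕ) :
    ∀ r : ℕ, r ≤ ∑ i ∈ s, b i →
    ∃ a : ℕ → ℕ, (∀ i, a i ≤ b i) ∧ ∑ i ∈ s, a i = r := by
  induction s using Finset.induction_on with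
  | empty =>
    intro r hr
    simp only [Finset.sum_empty, Nat.le_zero] at hr
    exact ⟨fun _ => 0, fun i => Nat.zero_le _, by simp [hr]⟩
  | insert _ _ hx ih =>
    rename_i x s
    intro r hr
    rw [Finset.sum_insert hx] at hr
    by_cases hc : r ≤ ∑ i ∈ s, b i
    · obtain ⟨a, ha, hsum⟩ := ih r hc
      refine ⟨Function.update a x 0, ?_, ?_⟩
      · intro i
        rcases eq_or_ne i x with rfl | hne
        · simp
        · simpa [Function.update_of_ne hne] using ha i
      · have hcong : ∑ i ∈ s, Function.update a x 0 i = ∑ i ∈ s, a i :=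
          Finset.sum_congr rfl fun i hi => Function.update_of_ne (by rintro rfl; exact hx hi) _ _
        rw [Finset.sum_insert hx, Function.update_self, hcong]
        simpa using hsum
    · push_neg at hc
      obtain ⟨a, ha, hsum⟩ := ih (∑ i ∈ s, b i) le_rfl
      refine ⟨Function.update a x (r - ∑ i ∈ s, b i), ?_, ?_⟩
      · intro i
        rcases eq_or_ne i x with rfl | hne
        · simp only [Function.update_self]; omega
        · simpa [Function.update_of_ne hne] using ha i
      · have hcong : ∑ i ∈ s, Function.update a x (r - ∑ i ∈ s, b i) i = ∑ i ∈ s, a i :=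
          Finset.sum_congr rfl fun i hi => Function.update_of_ne (by rintro rfl; exact hx hi) _ _
        rw [Finset.sum_insert hx, Function.update_self, hcong, hsum]
        omega

/-- Arithmetic form: let `m ≥ 1`, `L = lcm(2,…,m)`, `r ≥ 1`. Given naturals
`c₁,…,c_m` with `∑ i·c_i ≥ (r + m − 1)·L`, there exist naturals `d_i ≤ c_i`
with `∑ i·d_i = r·L`. -/
theorem stmt_3 (m r : ℕ) (hm : 1 ≤ m) (hr : 1 ≤ r)
    (L : ℕ) (hL : L = (Finset.Icc 2 m).lcm id)
    (c : ℕ → ℕ)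
    (h : (r + m - 1) * L ≤ ∑ i ∈ Finset.Icc 1 m, i * c i) :
    ∃ d : ℕ → ℕ, (∀ i, d i ≤ c i) ∧
      ∑ i ∈ Finset.Icc 1 m, i * d i = r * L := by
  have hdvd : ∀ i ∈ Finset.Icc 1 m, i ∣ L := by
    intro i hi
    simp only [Finset.mem_Icc] at hi
    rcases eq_or_lt_of_le hi.1 with h1 | h1
    · exact h1 ▸ one_dvd L
    · exact hL ▸ Finset.dvd_lcm (Finset.mem_Icc.mpr ⟨h1, hi.2⟩)
  have hLpos : 0 < L := by
    refine Nat.pos_of_ne_zero fun h0 => ?_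
    rw [hL] at h0
    rw [Finset.lcm_eq_zero_iff] at h0
    simp only [Set.mem_image, Finset.mem_coe, Finset.mem_Icc, id] at h0
    obtain ⟨i, hi, hi0⟩ := h0
    omega
  set b : ℕ → ℕ := fun i => c i / (L / i) with hb
  -- decomposition: i * c i = b i * L + i * (c i % (L / i)) for i ∈ Icc 1 m
  have hdecomp : ∀ i ∈ Finset.Icc 1 m,
      i * c i = b i * L + i * (c i % (L / i)) := by
    intro i hi
    have hiL : i * (L / i) = L := Nat.mul_div_cancel' (hdvd i hi)
    have := Nat.div_add_mod (c i) (L / i)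
    calc i * c i = i * ((L / i) * (c i / (L / i)) + c i % (L / i)) := by rw [this]
      _ = (i * (L / i)) * (c i / (L / i)) + i * (c i % (L / i)) := by ring
      _ = b i * L + i * (c i % (L / i)) := by rw [hiL, hb]; ring
  by_cases hcase : r ≤ ∑ i ∈ Finset.Icc 1 m, b i
  · obtain ⟨a, ha, hsum⟩ := stmt_3_aux (Finset.Icc 1 m) b r hcase
    refine ⟨fun i => a i * (L / i), ?_, ?_⟩
    · intro i
      calc a i * (L / i) ≤ b i * (L / i) := Nat.mul_le_mul_right _ (ha i)
        _ = c i / (L / i) * (L / i) := rfl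
        _ ≤ c i := Nat.div_mul_le_self _ _
    · calc ∑ i ∈ Finset.Icc 1 m, i * (a i * (L / i))
          = ∑ i ∈ Finset.Icc 1 m, a i * L := by
            refine Finset.sum_congr rfl fun i hi => ?_
            rw [show i * (a i * (L / i)) = a i * (i * (L / i)) by ring,
              Nat.mul_div_cancel' (hdvd i hi)]
        _ = (∑ i ∈ Finset.Icc 1 m, a i) * L := (Finset.sum_mul _ _ _).symm
        _ = r * L := by rw [hsum]
  · exfalso
    push_neg at hcase
    have hbound : ∀ i ∈ Finset.Icc 1 m, i * c i ≤ b i * L + (L - 1) := by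
      intro i hi
      rw [hdecomp i hi]
      have hi' := Finset.mem_Icc.mp hi
      have hiL : i * (L / i) = L := Nat.mul_div_cancel' (hdvd i hi)
      have hk : 0 < L / i := Nat.div_pos (Nat.le_of_dvd hLpos (hdvd i hi)) (by omega)
      have hmod : c i % (L / i) ≤ L / i - 1 := by
        have := Nat.mod_lt (c i) hk
        omega
      have : i * (c i % (L / i)) ≤ i * (L / i - 1) := Nat.mul_le_mul_left _ hmod
      have h2 : i * (L / i - 1) + i = L := by
        obtain ⟨k', hk'⟩ : ∃ k', L / i = k' + 1 := ⟨L / i - 1, by omega⟩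
        rw [hk'] at hiL
        rw [hk']
        calc i * (k' + 1 - 1) + i = i * (k' + 1) := by rw [Nat.add_sub_cancel]; ring
          _ = L := hiL
      omega
    have hsum2 : ∑ i ∈ Finset.Icc 1 m, i * c i ≤
        (∑ i ∈ Finset.Icc 1 m, b i) * L + m * (L - 1) := by
      calc ∑ i ∈ Finset.Icc 1 m, i * c i
          ≤ ∑ i ∈ Finset.Icc 1 m, (b i * L + (L - 1)) := Finset.sum_le_sum hbound
        _ = (∑ i ∈ Finset.Icc 1 m, b i) * L + (Finset.Icc 1 m).card * (L - 1) := by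
            rw [Finset.sum_add_distrib, Finset.sum_mul, Finset.sum_const, smul_eq_mul]
        _ = (∑ i ∈ Finset.Icc 1 m, b i) * L + m * (L - 1) := by
            rw [Nat.card_Icc]; congr 2
    set S := ∑ i ∈ Finset.Icc 1 m, b i with hS
    have hSle : S * L ≤ (r - 1) * L := Nat.mul_le_mul_right _ (by omega)
    have hml : m * (L - 1) + m = m * L := by
      have : L - 1 + 1 = L := by omega
      calc m * (L - 1) + m = m * (L - 1 + 1) := by ring
        _ = m * L := by rw [this]
    have heq : (r - 1) * L + m * L = (r + m - 1) * L := by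
      rw [← Nat.add_mul]; congr 1; omega
    have hA : 1 ≤ (r + m - 1) * L := Nat.one_le_iff_ne_zero.mpr
      (Nat.mul_ne_zero (by omega) (by omega))
    omega
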